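/- For all complex numbers α, β with E ≠ 0, J₀ ≠ 1, and V₁V₂V₃ ≠ 0, each ξ_k = F/(4(V_iV_j)²) satisfies the cubic equation 4ξ³ − (27J₀/(J₀−1))·ξ − 27J₀/(J₀−1) = 0, where J₀ = F³/E². -/

import Mathlib

theorem xi_cubic (α β : ℂ)
    (V₁ V₂ V₃ E F J₀ ξ₁ ξ₂ ξ₃ : ℂ)
    (hV₁ : V₁ = 2 * Complex.I * α * β)
    (hV₂ : V₂ = Complex.I * (α ^ 2 - β ^ 2))
    (hV₃ : V₃ = α ^ 2 + β ^ 2)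
    (hE : E = 8 * (α ^ 12 - 33 * α ^ 8 * β ^ 4 - 33 * α ^ 4 * β ^ 8 + β ^ 12))
    (hF : F = 4 * (α ^ 8 + 14 * α ^ 4 * β ^ 4 + β ^ 8))
    (hJ : J₀ = F ^ 3 / E ^ 2)
    (hE0 : E ≠ 0) (hJ1 : J₀ ≠ 1) (hV : V₁ * V₂ * V₃ ≠ 0)
    (hξ₁ : ξ₁ = F / (4 * (V₂ * V₃) ^ 2))
    (hξ₂ : ξ₂ = F / (4 * (V₁ * V₃) ^ 2))
    (hξ₃ : ξ₃ = F / (4 * (V₁ * V₂) ^ 2)) :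
    ∀ ξ ∈ ({ξ₁, ξ₂, ξ₃} : Set ℂ),
      4 * ξ ^ 3 - (27 * J₀ / (J₀ - 1)) * ξ - 27 * J₀ / (J₀ - 1) = 0 := by
  have h1 : V₁ ≠ 0 := fun h => hV (by rw [h]; ring)
  have h2 : V₂ ≠ 0 := fun h => hV (by rw [h]; ring)
  have h3 : V₃ ≠ 0 := fun h => hV (by rw [h]; ring)
  have hE2 : E ^ 2 ≠ 0 := pow_ne_zero _ hE0
  have hFE : F ^ 3 - E ^ 2 ≠ 0 := by
    intro h
    apply hJ1
    rw [hJ]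
    field_simp
    linear_combination h
  have hc : 27 * J₀ / (J₀ - 1) = 27 * F ^ 3 / (F ^ 3 - E ^ 2) := by
    rw [hJ]
    rw [div_sub_one hE2]
    field_simp
  have key : ∀ ξ D W : ℂ, D ≠ 0 → ξ = F / (4 * D ^ 2) → D ^ 2 = W →
      F ^ 3 - E ^ 2 = 108 * W ^ 2 * F + 432 * W ^ 3 →
      4 * ξ ^ 3 - (27 * J₀ / (J₀ - 1)) * ξ - 27 * J₀ / (J₀ - 1) = 0 := by
    intro ξ D W hD hξ hW hid
    have hW0 : W ≠ 0 := hW ▸ pow_ne_zero _ hD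
    have hden : 108 * W ^ 2 * F + 432 * W ^ 3 ≠ 0 := hid ▸ hFE
    rw [hξ, hW, hc, hid]
    have h4W : (4 : ℂ) * W ≠ 0 := mul_ne_zero (by norm_num) hW0
    have hden' : F * 108 + W * 432 ≠ 0 := fun h => hden (by linear_combination W ^ 2 * h)
    field_simp
    ring
  rintro ξ (rfl | rfl | rfl)
  · refine key _ (V₂ * V₃) (-((α ^ 2 - β ^ 2) ^ 2 * (α ^ 2 + β ^ 2) ^ 2))
      (mul_ne_zero h2 h3) hξ₁ ?_ ?_
    · rw [hV₂, hV₃]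
      linear_combination ((α ^ 2 - β ^ 2) ^ 2 * (α ^ 2 + β ^ 2) ^ 2) * Complex.I_sq
    · rw [hE, hF]; ring
  · refine key _ (V₁ * V₃) (-(4 * α ^ 2 * β ^ 2 * (α ^ 2 + β ^ 2) ^ 2))
      (mul_ne_zero h1 h3) hξ₂ ?_ ?_
    · rw [hV₁, hV₃]
      linear_combination (4 * α ^ 2 * β ^ 2 * (α ^ 2 + β ^ 2) ^ 2) * Complex.I_sq
    · rw [hE, hF]; ring
  · refine key _ (V₁ * V₂) (4 * α ^ 2 * β ^ 2 * (α ^ 2 - β ^ 2) ^ 2)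
      (mul_ne_zero h1 h2) hξ₃ ?_ ?_
    · rw [hV₁, hV₂]
      linear_combination (4 * α ^ 2 * β ^ 2 * (α ^ 2 - β ^ 2) ^ 2 * (Complex.I ^ 2 - 1)) * Complex.I_sq
    · rw [hE, hF]; ring
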